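/- Let A ∈ ℂ^{m×n} satisfy A A* = I, let b ∈ ℂ^m, μ > 0, β > 0 and γ ∈ (0, (1+√5)/2). Consider the dual alternating direction iteration: given (x^k, y^k), set z^{k+1} = P_{B₁^∞}(A*y^k + x^k/β), then y^{k+1} = (β/(μ+β))·(A z^{k+1} − (A x^k − b)/β), then x^{k+1} = x^k − γβ(z^{k+1} − A*y^{k+1}), where P_{B₁^∞} is the componentwise projection onto B₁^∞ = {ξ ∈ ℂ^n : ‖ξ‖_∞ ≤ 1}. Then for any starting point (x^0, y^0), the sequence (x^k, y^k, z^k) converges to a limit (x̃, ỹ, z̃), where x̃ is a solution of min over x ∈ ℂ^n of ‖x‖₁ + (1/(2μ))‖A x − b‖₂², and (ỹ, z̃) is a solution of max over y ∈ ℂ^m, z ∈ ℂ^n of Re(b*y) − (μ/2)‖y‖₂² subject to z − A*y = 0 and ‖z‖_∞ ≤ 1. -/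

import Mathlib

open Filter Topology Matrix Finset

noncomputable def l1 {ι : Type*} [Fintype ι] (v : ι → ℂ) : ℝ := ∑ i, ‖v i‖

noncomputable def l2sq {ι : Type*} [Fintype ι] (v : ι → ℂ) : ℝ := ∑ i, ‖v i‖^2

noncomputable def l2 {ι : Type*} [Fintype ι] (v : ι → ℂ) : ℝ := Real.sqrt (l2sq v)

noncomputable def linf {ι : Type*} [Fintype ι] (v : ι → ℂ) : ℝ := ⨆ i, ‖v i‖

noncomputable def csign (w : ℂ) : ℂ := if w = 0 then 0 else w / ((‖w‖ : ℝ) : ℂ)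

noncomputable def shrink {ι : Type*} [Fintype ι] (z : ι → ℂ) (ν : ℝ) : ι → ℂ :=
  fun i => ((max (‖z i‖ - ν) 0 : ℝ) : ℂ) * csign (z i)

noncomputable def reInner {ι : Type*} [Fintype ι] (y v : ι → ℂ) : ℝ :=
  (∑ i, (starRingEnd ℂ) (y i) * v i).re

noncomputable def projBall {ι : Type*} [Fintype ι] (t : ℝ) (v : ι → ℂ) : ι → ℂ :=
  if l2 v ≤ t then v else (t / l2 v) • v

noncomputable def projBox {ι : Type*} [Fintype ι] (v : ι → ℂ) : ι → ℂ :=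
  fun i => if ‖v i‖ ≤ 1 then v i else v i / ((‖v i‖ : ℝ) : ℂ)

noncomputable def lmax {m n : ℕ} (A : Matrix (Fin m) (Fin n) ℂ) : ℝ :=
  ⨆ i, (Matrix.isHermitian_conjTranspose_mul_self A).eigenvalues i

section basics
variable {ι : Type*} [Fintype ι]

lemma reInner_eq (u v : ι → ℂ) : reInner u v = ∑ i, ((starRingEnd ℂ) (u i) * v i).re := by
  simp [reInner, Complex.re_sum]

lemma l2sq_eq_reInner (v : ι → ℂ) : l2sq v = reInner v v := by
  rw [l2sq, reInner_eq]
  congr 1; funext i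
  simp [Complex.sq_norm, Complex.normSq_apply, Complex.mul_re]

lemma reInner_comm (u v : ι → ℂ) : reInner u v = reInner v u := by
  rw [reInner_eq, reInner_eq]
  congr 1; funext i
  rw [show (starRingEnd ℂ) (u i) * v i = (starRingEnd ℂ) ((starRingEnd ℂ) (v i) * u i) by
    simp [mul_comm]]
  rw [Complex.conj_re]

lemma reInner_add_left (u v w : ι → ℂ) : reInner (u + v) w = reInner u w + reInner v w := by
  simp [reInner_eq, ← Finset.sum_add_distrib, add_mul]

lemma reInner_add_right (u v w : ι → ℂ) : reInner u (v + w) = reInner u v + reInner u w := by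
  simp [reInner_eq, ← Finset.sum_add_distrib, mul_add]

lemma reInner_smul_left (r : ℝ) (u v : ι → ℂ) : reInner (r • u) v = r * reInner u v := by
  simp [reInner_eq, Finset.mul_sum, Complex.real_smul, Complex.re_ofReal_mul, mul_assoc]

lemma reInner_smul_right (r : ℝ) (u v : ι → ℂ) : reInner u (r • v) = r * reInner u v := by
  simp [reInner_eq, Finset.mul_sum, Complex.real_smul, mul_left_comm, Complex.re_ofReal_mul]

lemma reInner_neg_left (u v : ι → ℂ) : reInner (-u) v = - reInner u v := by
  simp [reInner_eq, ← Finset.sum_neg_distrib]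

lemma reInner_neg_right (u v : ι → ℂ) : reInner u (-v) = - reInner u v := by
  simp [reInner_eq, ← Finset.sum_neg_distrib]

lemma reInner_sub_left (u v w : ι → ℂ) : reInner (u - v) w = reInner u w - reInner v w := by
  rw [sub_eq_add_neg, reInner_add_left, reInner_neg_left]; ring

lemma reInner_sub_right (u v w : ι → ℂ) : reInner u (v - w) = reInner u v - reInner u w := by
  rw [sub_eq_add_neg, reInner_add_right, reInner_neg_right]; ring

lemma l2sq_nonneg (v : ι → ℂ) : 0 ≤ l2sq v :=
  Finset.sum_nonneg fun i _ => sq_nonneg _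

lemma l2sq_add (u v : ι → ℂ) : l2sq (u + v) = l2sq u + 2 * reInner u v + l2sq v := by
  rw [l2sq_eq_reInner, l2sq_eq_reInner, l2sq_eq_reInner, reInner_add_left, reInner_add_right,
    reInner_add_right, reInner_comm v u]; ring

lemma l2sq_smul (r : ℝ) (v : ι → ℂ) : l2sq (r • v) = r^2 * l2sq v := by
  rw [l2sq_eq_reInner, l2sq_eq_reInner, reInner_smul_left, reInner_smul_right]; ring

lemma sq_abs_le_l2sq (v : ι → ℂ) (i : ι) : (‖v i‖)^2 ≤ l2sq v :=
  Finset.single_le_sum (f := fun j => (‖v j‖)^2) (fun j _ => sq_nonneg _) (mem_univ i)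

end basics

section mat
variable {m n : ℕ} (A : Matrix (Fin m) (Fin n) ℂ)

lemma reInner_eq_dot {ι' : Type*} [Fintype ι'] (u v : ι' → ℂ) :
    reInner u v = (star u ⬝ᵥ v).re := by
  rfl

lemma reInner_mulVec_right (u : Fin m → ℂ) (w : Fin n → ℂ) :
    reInner (Aᴴ *ᵥ u) w = reInner u (A *ᵥ w) := by
  rw [reInner_eq_dot, reInner_eq_dot, Matrix.star_mulVec, Matrix.conjTranspose_conjTranspose,
    ← dotProduct_mulVec]

lemma reInner_mulVec_left (u : Fin n → ℂ) (w : Fin m → ℂ) :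
    reInner (A *ᵥ u) w = reInner u (Aᴴ *ᵥ w) := by
  rw [reInner_eq_dot, reInner_eq_dot, Matrix.star_mulVec, ← dotProduct_mulVec]

lemma mulVec_conjT_cancel (hA : A * Aᴴ = 1) (u : Fin m → ℂ) : A *ᵥ (Aᴴ *ᵥ u) = u := by
  rw [Matrix.mulVec_mulVec, hA, Matrix.one_mulVec]

lemma reInner_iso (hA : A * Aᴴ = 1) (u v : Fin m → ℂ) :
    reInner (Aᴴ *ᵥ u) (Aᴴ *ᵥ v) = reInner u v := by
  rw [reInner_mulVec_right A, mulVec_conjT_cancel A hA]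

lemma l2sq_iso (hA : A * Aᴴ = 1) (u : Fin m → ℂ) : l2sq (Aᴴ *ᵥ u) = l2sq u := by
  rw [l2sq_eq_reInner, reInner_iso A hA, l2sq_eq_reInner]

end mat

section proj
variable {ι : Type*} [Fintype ι]

lemma abs_projBox_le (v : ι → ℂ) (i : ι) : ‖projBox v i‖ ≤ 1 := by
  rw [projBox]
  by_cases h : ‖v i‖ ≤ 1
  · simpa [h] using h
  · have hv : v i ≠ 0 := by
      intro h0; rw [h0] at h; simp at h
    have habs : (‖v i‖ : ℝ) ≠ 0 := by
      simpa using hv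
    simp only [h, if_false]
    rw [norm_div, Complex.norm_real, Real.norm_eq_abs, abs_of_nonneg (norm_nonneg _),
      div_self habs]

lemma projBox_scalar_ineq (w v : ℂ) (hv : ‖v‖ ≤ 1) (p : ℂ)
    (hp : p = if ‖w‖ ≤ 1 then w else w / (‖w‖ : ℂ)) :
    ((starRingEnd ℂ) (w - p) * (v - p)).re ≤ 0 := by
  by_cases h : ‖w‖ ≤ 1
  · simp [hp, h]
  · push_neg at h
    have hw : w ≠ 0 := by
      intro h0; rw [h0] at h; simp at h; linarith
    have habs : (0:ℝ) < ‖w‖ := norm_pos_iff.mpr hw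
    have hp' : p = w / (‖w‖ : ℂ) := by simp [hp, not_le.mpr h]
    have hwp : w - p = (((‖w‖ - 1) / ‖w‖ : ℝ) : ℂ) * w := by
      rw [hp']
      have habs' : ((‖w‖ : ℝ) : ℂ) ≠ 0 := by
        simpa using habs.ne'
      field_simp
      push_cast
      field_simp
    have key : ((starRingEnd ℂ) w * (v - p)).re ≤ 0 := by
      rw [hp']
      have h1 : (starRingEnd ℂ) w * (v - w / (‖w‖ : ℂ))
          = (starRingEnd ℂ) w * v - (starRingEnd ℂ) w * w / (‖w‖ : ℂ) := by ring
      rw [h1]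
      have h2 : (starRingEnd ℂ) w * w = ((‖w‖ ^ 2 : ℝ) : ℂ) := by
        rw [Complex.sq_norm]
        exact (Complex.normSq_eq_conj_mul_self).symm
      rw [h2]
      have h3 : ((‖w‖ ^ 2 : ℝ) : ℂ) / ((‖w‖ : ℝ) : ℂ)
          = ((‖w‖ : ℝ) : ℂ) := by
        rw [← Complex.ofReal_div]
        congr 1
        field_simp
      rw [h3, Complex.sub_re, Complex.ofReal_re]
      have h4 : ((starRingEnd ℂ) w * v).re ≤ ‖w‖ := by
        calc ((starRingEnd ℂ) w * v).re ≤ ‖(starRingEnd ℂ) w * v‖ :=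
              Complex.re_le_norm _
          _ = ‖w‖ * ‖v‖ := by rw [norm_mul, Complex.norm_conj]
          _ ≤ ‖w‖ * 1 := by
              exact mul_le_mul_of_nonneg_left hv (norm_nonneg _)
          _ = ‖w‖ := mul_one _
      linarith
    rw [hwp]
    have : ((((‖w‖ - 1) / ‖w‖ : ℝ) : ℂ) * w).re = 0 ∨ True := Or.inr trivial
    rw [_root_.map_mul, Complex.conj_ofReal, mul_assoc, Complex.re_ofReal_mul]
    have hr : (0:ℝ) ≤ (‖w‖ - 1) / ‖w‖ :=
      div_nonneg (by linarith) habs.le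
    exact mul_nonpos_of_nonneg_of_nonpos hr key

lemma projBox_var_ineq (w v : ι → ℂ) (hv : ∀ i, ‖v i‖ ≤ 1) :
    reInner (w - projBox w) (v - projBox w) ≤ 0 := by
  rw [reInner_eq]
  apply Finset.sum_nonpos
  intro i _
  exact projBox_scalar_ineq (w i) (v i) (hv i) (projBox w i) rfl
end proj

section tendstos
variable {ι : Type*} [Fintype ι] {ι₂ : Type*} [Fintype ι₂]

lemma tendsto_reInner {u w : ℕ → ι → ℂ} {U W : ι → ℂ}
    (hu : Tendsto u atTop (𝓝 U)) (hw : Tendsto w atTop (𝓝 W)) :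
    Tendsto (fun k => reInner (u k) (w k)) atTop (𝓝 (reInner U W)) := by
  simp only [reInner_eq]
  apply tendsto_finset_sum
  intro i _
  have hui : Tendsto (fun k => u k i) atTop (𝓝 (U i)) := tendsto_pi_nhds.mp hu i
  have hwi : Tendsto (fun k => w k i) atTop (𝓝 (W i)) := tendsto_pi_nhds.mp hw i
  exact (Complex.continuous_re.tendsto _).comp
    (((Complex.continuous_conj.tendsto _).comp hui).mul hwi)

lemma tendsto_l2sq {u : ℕ → ι → ℂ} {U : ι → ℂ} (hu : Tendsto u atTop (𝓝 U)) :
    Tendsto (fun k => l2sq (u k)) atTop (𝓝 (l2sq U)) := by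
  simp only [l2sq_eq_reInner]
  exact tendsto_reInner hu hu

lemma tendsto_of_l2sq_zero {u : ℕ → ι → ℂ} {U : ι → ℂ}
    (h : Tendsto (fun k => l2sq (u k - U)) atTop (𝓝 0)) :
    Tendsto u atTop (𝓝 U) := by
  rw [tendsto_pi_nhds]
  intro i
  rw [tendsto_iff_dist_tendsto_zero]
  have hsq : Tendsto (fun k => (‖(u k - U) i‖)^2) atTop (𝓝 0) := by
    apply squeeze_zero (fun k => sq_nonneg _) (fun k => sq_abs_le_l2sq ((u k - U)) i) h
  have := (Real.continuous_sqrt.tendsto 0).comp hsq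
  simp only [Function.comp_def] at this
  rw [Real.sqrt_zero] at this
  apply this.congr
  intro k
  rw [Real.sqrt_sq (norm_nonneg _)]
  simp [Complex.dist_eq]

lemma tendsto_mulVec {M : Matrix ι₂ ι ℂ} {u : ℕ → ι → ℂ} {U : ι → ℂ}
    (hu : Tendsto u atTop (𝓝 U)) :
    Tendsto (fun k => M *ᵥ u k) atTop (𝓝 (M *ᵥ U)) := by
  rw [tendsto_pi_nhds]
  intro j
  simp only [Matrix.mulVec, dotProduct]
  apply tendsto_finset_sum
  intro i _
  exact tendsto_const_nhds.mul (tendsto_pi_nhds.mp hu i)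

lemma tendsto_shift {α : Type*} [TopologicalSpace α] {u : ℕ → α} {U : α}
    (h : Tendsto (fun k => u (k+1)) atTop (𝓝 U)) : Tendsto u atTop (𝓝 U) :=
  (Filter.tendsto_add_atTop_iff_nat 1).mp h

end tendstos

section helper

lemma le_of_eps {a b C : ℝ} (hC : 0 ≤ C)
    (h : ∀ ε : ℝ, 0 < ε → ε ≤ 1 → a ≤ b + C * ε) : a ≤ b := by
  by_contra hab
  push_neg at hab
  have h1 : 0 < a - b := by linarith
  have hC1 : 0 < C + 1 := by linarith
  set ε := min 1 ((a - b)/(2*(C+1))) with hεdef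
  have hεpos : 0 < ε := lt_min one_pos (by positivity)
  have hε1 : ε ≤ 1 := min_le_left _ _
  have hε2 : ε ≤ (a - b)/(2*(C+1)) := min_le_right _ _
  have h2 := h ε hεpos hε1
  have h3 : C * ε ≤ (C+1) * ((a-b)/(2*(C+1))) := by
    apply mul_le_mul (by linarith) hε2 hεpos.le (by linarith)
  have h4 : (C+1) * ((a-b)/(2*(C+1))) = (a-b)/2 := by field_simp
  linarith

end helper

section kkt
variable {m n : ℕ}

lemma continuous_l1 : Continuous (l1 : (Fin n → ℂ) → ℝ) :=
  continuous_finset_sum _ fun i _ => continuous_norm.comp (continuous_apply i)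

lemma continuous_l2sq : Continuous (l2sq : (Fin n → ℂ) → ℝ) :=
  continuous_finset_sum _ fun i _ =>
    ((continuous_norm.comp (continuous_apply i)).pow 2)

lemma continuous_mulVecFun (M : Matrix (Fin m) (Fin n) ℂ) :
    Continuous (fun x : Fin n → ℂ => M *ᵥ x) := by
  unfold Matrix.mulVec dotProduct
  exact continuous_pi fun j => continuous_finset_sum _ fun i _ =>
    continuous_const.mul (continuous_apply i)

lemma exists_min (A : Matrix (Fin m) (Fin n) ℂ) (b : Fin m → ℂ) (μ : ℝ) (hμ : 0 < μ) :
    ∃ xh : Fin n → ℂ, ∀ x' : Fin n → ℂ,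
      l1 xh + (1/(2*μ)) * l2sq (A *ᵥ xh - b) ≤ l1 x' + (1/(2*μ)) * l2sq (A *ᵥ x' - b) := by
  set f : (Fin n → ℂ) → ℝ := fun x => l1 x + (1/(2*μ)) * l2sq (A *ᵥ x - b) with hf
  have hfc : Continuous f := by
    apply continuous_l1.add
    exact continuous_const.mul (continuous_l2sq.comp ((continuous_mulVecFun A).sub
      continuous_const))
  have hfnonneg : ∀ x, l1 x ≤ f x := by
    intro x
    have h1 : 0 ≤ l2sq (A *ᵥ x - b) := l2sq_nonneg _
    have h2 : 0 ≤ (1/(2*μ)) := by positivity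
    simp only [hf]
    nlinarith
  have hl1nonneg : ∀ x : Fin n → ℂ, 0 ≤ l1 x :=
    fun x => Finset.sum_nonneg fun i _ => norm_nonneg _
  set R := f 0 with hR
  have hR0 : 0 ≤ R := le_trans (hl1nonneg 0) (hfnonneg 0)
  set S : Set (Fin n → ℂ) := Set.univ.pi (fun _ => Metric.closedBall (0:ℂ) R) with hS
  have hScomp : IsCompact S := isCompact_univ_pi fun _ => isCompact_closedBall _ _
  have h0S : (0 : Fin n → ℂ) ∈ S := by
    intro i _
    simpa using hR0
  obtain ⟨xh, hxhS, hmin⟩ := hScomp.exists_isMinOn ⟨0, h0S⟩ hfc.continuousOn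
  refine ⟨xh, fun x' => ?_⟩
  by_cases hx' : x' ∈ S
  · exact hmin hx'
  · have : ∃ i, R < ‖x' i‖ := by
      by_contra hc
      push_neg at hc
      exact hx' (fun i _ => by simpa [Complex.dist_eq] using hc i)
    obtain ⟨i, hi⟩ := this
    have h1 : R < l1 x' := lt_of_lt_of_le hi (Finset.single_le_sum
      (f := fun j => ‖x' j‖) (fun j _ => norm_nonneg _) (mem_univ i))
    have h2 : f xh ≤ R := hmin h0S
    have h3 : l1 x' ≤ f x' := hfnonneg x'
    show f xh ≤ f x'
    linarith

lemma exists_kkt (A : Matrix (Fin m) (Fin n) ℂ) (b : Fin m → ℂ) (μ : ℝ) (hμ : 0 < μ) :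
    ∃ (xh : Fin n → ℂ) (yh : Fin m → ℂ) (zh : Fin n → ℂ),
      zh = Aᴴ *ᵥ yh ∧ μ • yh = b - A *ᵥ xh ∧ (∀ i, ‖zh i‖ ≤ 1) ∧
      (∀ v : Fin n → ℂ, (∀ i, ‖v i‖ ≤ 1) → reInner xh (v - zh) ≤ 0) := by
  obtain ⟨xh, hmin⟩ := exists_min A b μ hμ
  set yh : Fin m → ℂ := (1/μ) • (b - A *ᵥ xh) with hyh
  set zh : Fin n → ℂ := Aᴴ *ᵥ yh with hzh
  have hK3 : μ • yh = b - A *ᵥ xh := by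
    rw [hyh, smul_smul, mul_one_div, div_self hμ.ne', one_smul]
  set c : Fin m → ℂ := A *ᵥ xh - b with hc
  set g : Fin n → ℂ := Aᴴ *ᵥ c with hg
  have hgz : ∀ i, g i = -(μ:ℂ) * zh i := by
    intro i
    have h1 : c = -(μ • yh) := by rw [hK3, hc, neg_sub]
    have h2 : Aᴴ *ᵥ (-(μ • yh)) = -(μ • (Aᴴ *ᵥ yh)) := by
      rw [Matrix.mulVec_neg, Matrix.mulVec_smul]
    rw [hg, h1, h2, ← hzh]
    simp [Complex.real_smul]
  -- master inequality
  have master : ∀ (i : Fin n) (t : ℂ),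
      ((starRingEnd ℂ) t * zh i).re ≤ ‖xh i + t‖ - ‖xh i‖
        + (l2sq (fun j => A j i) / (2*μ)) * (‖t‖)^2 := by
    intro i t
    set pert : Fin n → ℂ := fun j => xh j + (if j = i then t else 0) with hpert
    have hl1 : l1 pert = l1 xh + (‖xh i + t‖ - ‖xh i‖) := by
      have h1 : ∀ j, ‖pert j‖ = ‖xh j‖ +
          (if j = i then (‖xh i + t‖ - ‖xh i‖) else 0) := by
        intro j
        by_cases hj : j = i
        · subst hj; simp [hpert]
        · simp [hpert, hj]
      rw [l1]
      simp only [h1]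
      rw [Finset.sum_add_distrib, Finset.sum_ite_eq' univ i
        (fun _ => ‖xh i + t‖ - ‖xh i‖)]
      simp [l1]
    have hmv : A *ᵥ pert - b = c + (fun j => A j i * t) := by
      funext j
      simp only [hpert, Matrix.mulVec, dotProduct, Pi.sub_apply, Pi.add_apply, hc]
      rw [show (∑ l, A j l * (xh l + if l = i then t else 0))
          = (∑ l, A j l * xh l) + ∑ l, (if l = i then A j l * t else 0) by
        rw [← Finset.sum_add_distrib]
        refine Finset.sum_congr rfl fun l _ => ?_
        by_cases hl : l = i <;> simp [hl, mul_add]]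
      rw [Finset.sum_ite_eq' univ i (fun l => A j l * t)]
      simp [Matrix.mulVec, dotProduct]
      ring
    have hcross : reInner c (fun j => A j i * t) = ((starRingEnd ℂ) t * g i).re := by
      rw [reInner_comm, reInner_eq, ← Complex.re_sum]
      congr 1
      rw [hg]
      simp only [Matrix.mulVec, dotProduct, Matrix.conjTranspose_apply,
        Finset.mul_sum, Complex.star_def]
      refine Finset.sum_congr rfl fun j _ => ?_
      rw [_root_.map_mul]
      ring
    have hl2col : l2sq (fun j => A j i * t) = (‖t‖)^2 * l2sq (fun j => A j i) := by
      rw [l2sq, l2sq, Finset.mul_sum]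
      refine Finset.sum_congr rfl fun j _ => ?_
      rw [norm_mul, mul_pow]
      ring
    have hL2 : l2sq (A *ᵥ pert - b) = l2sq c + 2 * ((starRingEnd ℂ) t * g i).re
        + (‖t‖)^2 * l2sq (fun j => A j i) := by
      rw [hmv, l2sq_add, hcross, hl2col]
    have hineq := hmin pert
    rw [hl1, hL2] at hineq
    have hre : ((starRingEnd ℂ) t * g i).re = -μ * ((starRingEnd ℂ) t * zh i).re := by
      rw [hgz i]
      rw [show (starRingEnd ℂ) t * (-(μ:ℂ) * zh i)
          = ((-μ : ℝ) : ℂ) * ((starRingEnd ℂ) t * zh i) by push_cast; ring]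
      rw [Complex.re_ofReal_mul]
    rw [hre] at hineq
    have e1 : (1/(2*μ)) * (2 * (-μ * ((starRingEnd ℂ) t * zh i).re))
        = -((starRingEnd ℂ) t * zh i).re := by field_simp
    have hC0 : 0 ≤ l2sq (fun j => A j i) := l2sq_nonneg _
    have h2μ : 0 < 2*μ := by linarith
    have e2 : (1/(2*μ)) * ((‖t‖)^2 * l2sq (fun j => A j i))
        = (l2sq (fun j => A j i) / (2*μ)) * (‖t‖)^2 := by ring
    nlinarith [hineq]
  -- claim A : bound on zh
  have habs1 : ∀ i, ‖zh i‖ ≤ 1 := by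
    intro i
    by_cases hs : zh i = 0
    · simp [hs]
    · set C := l2sq (fun j => A j i) / (2*μ) with hCdef
      have hC0 : 0 ≤ C := div_nonneg (l2sq_nonneg _) (by linarith)
      apply le_of_eps hC0
      intro ε hε0 hε1
      have hs0 : 0 < ‖zh i‖ := norm_pos_iff.mpr hs
      set t : ℂ := ((ε / ‖zh i‖ : ℝ) : ℂ) * zh i with ht
      have hconj : (starRingEnd ℂ) (zh i) * zh i = ((‖zh i‖ ^2 : ℝ) : ℂ) := by
        rw [Complex.sq_norm]
        exact Complex.normSq_eq_conj_mul_self.symm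
      have h1 : ((starRingEnd ℂ) t * zh i).re = ε * ‖zh i‖ := by
        rw [ht, _root_.map_mul, Complex.conj_ofReal]
        rw [show ((ε / ‖zh i‖ : ℝ) : ℂ) * (starRingEnd ℂ) (zh i) * zh i
            = ((ε / ‖zh i‖ : ℝ) : ℂ) * ((starRingEnd ℂ) (zh i) * zh i) by ring]
        rw [hconj, ← Complex.ofReal_mul, Complex.ofReal_re]
        field_simp
      have habst : ‖t‖ = ε := by
        rw [ht, norm_mul, Complex.norm_real, Real.norm_eq_abs,
          abs_of_nonneg (div_nonneg hε0.le hs0.le)]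
        field_simp
      have hM := master i t
      rw [h1, habst] at hM
      have h2 : ‖xh i + t‖ ≤ ‖xh i‖ + ε := by
        calc ‖xh i + t‖ ≤ ‖xh i‖ + ‖t‖ :=
              norm_add_le _ _
          _ = ‖xh i‖ + ε := by rw [habst]
      have h3 : ε * ‖zh i‖ ≤ ε + C * ε^2 := by linarith
      nlinarith [h3, hε0]
  -- claim B : alignment
  have halign : ∀ i, ‖xh i‖ ≤ ((starRingEnd ℂ) (xh i) * zh i).re := by
    intro i
    by_cases hx0 : xh i = 0
    · simp [hx0]
    · set C := (l2sq (fun j => A j i) / (2*μ)) * (‖xh i‖)^2 with hCdef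
      have hC0 : 0 ≤ C := by
        apply mul_nonneg (div_nonneg (l2sq_nonneg _) (by linarith)) (sq_nonneg _)
      apply le_of_eps hC0
      intro ε hε0 hε1
      set t : ℂ := ((-ε : ℝ) : ℂ) * xh i with ht
      have habst : ‖t‖ = ε * ‖xh i‖ := by
        rw [ht, norm_mul, Complex.norm_real, Real.norm_eq_abs, abs_of_neg (by linarith : (-ε:ℝ) < 0)]
        ring_nf
      have h1 : ((starRingEnd ℂ) t * zh i).re
          = -ε * ((starRingEnd ℂ) (xh i) * zh i).re := by
        rw [ht, _root_.map_mul, Complex.conj_ofReal]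
        rw [show ((-ε : ℝ) : ℂ) * (starRingEnd ℂ) (xh i) * zh i
            = ((-ε : ℝ) : ℂ) * ((starRingEnd ℂ) (xh i) * zh i) by ring]
        rw [Complex.re_ofReal_mul]
      have h2 : ‖xh i + t‖ = (1-ε) * ‖xh i‖ := by
        rw [show xh i + t = ((1 - ε : ℝ) : ℂ) * xh i by rw [ht]; push_cast; ring]
        rw [norm_mul, Complex.norm_real, Real.norm_eq_abs, abs_of_nonneg (by linarith : (0:ℝ) ≤ 1-ε)]
      have hM := master i t
      rw [h1, h2, habst] at hM
      have hC' : (l2sq (fun j => A j i) / (2*μ)) * (ε * ‖xh i‖)^2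
          = C * ε^2 := by rw [hCdef]; ring
      rw [hC'] at hM
      nlinarith [hM, hε0]
  -- conclusion
  refine ⟨xh, yh, zh, hzh, hK3, habs1, fun v hv => ?_⟩
  rw [reInner_sub_right]
  have hle : reInner xh v ≤ reInner xh zh := by
    rw [reInner_eq, reInner_eq]
    apply Finset.sum_le_sum
    intro i _
    calc ((starRingEnd ℂ) (xh i) * v i).re ≤ ‖(starRingEnd ℂ) (xh i) * v i‖ :=
          Complex.re_le_norm _
      _ = ‖xh i‖ * ‖v i‖ := by
          rw [norm_mul, Complex.norm_conj]
      _ ≤ ‖xh i‖ * 1 := mul_le_mul_of_nonneg_left (hv i) (norm_nonneg _)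
      _ = ‖xh i‖ := mul_one _
      _ ≤ ((starRingEnd ℂ) (xh i) * zh i).re := halign i
  linarith

end kkt

section opt
variable {m n : ℕ}

lemma reInner_le_l1 (zh v : Fin n → ℂ) (hzh : ∀ i, ‖zh i‖ ≤ 1) :
    reInner zh v ≤ l1 v := by
  rw [reInner_eq, l1]
  apply Finset.sum_le_sum
  intro i _
  calc ((starRingEnd ℂ) (zh i) * v i).re ≤ ‖(starRingEnd ℂ) (zh i) * v i‖ :=
        Complex.re_le_norm _
    _ = ‖zh i‖ * ‖v i‖ := by rw [norm_mul, Complex.norm_conj]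
    _ ≤ 1 * ‖v i‖ := mul_le_mul_of_nonneg_right (hzh i) (norm_nonneg _)
    _ = ‖v i‖ := one_mul _

lemma kkt_reInner_eq_l1 (xh zh : Fin n → ℂ) (hzh : ∀ i, ‖zh i‖ ≤ 1)
    (hK1 : ∀ v : Fin n → ℂ, (∀ i, ‖v i‖ ≤ 1) → reInner xh (v - zh) ≤ 0) :
    reInner zh xh = l1 xh := by
  have h1 : reInner zh xh ≤ l1 xh := reInner_le_l1 zh xh hzh
  have h2 : l1 xh ≤ reInner zh xh := by
    set v : Fin n → ℂ := fun i => if xh i = 0 then 0 else xh i / (‖xh i‖ : ℂ)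
      with hv
    have hvb : ∀ i, ‖v i‖ ≤ 1 := by
      intro i
      by_cases h0 : xh i = 0
      · simp [hv, h0]
      · have : ‖xh i‖ ≠ 0 := by simpa using h0
        simp only [hv, h0, if_false]
        rw [norm_div, Complex.norm_real, Real.norm_eq_abs, abs_of_nonneg (norm_nonneg _),
          div_self this]
    have hvl : reInner xh v = l1 xh := by
      rw [reInner_eq, l1]
      refine Finset.sum_congr rfl fun i _ => ?_
      by_cases h0 : xh i = 0
      · simp [hv, h0]
      · have habs : (0:ℝ) < ‖xh i‖ := norm_pos_iff.mpr h0
        simp only [hv, h0, if_false]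
        rw [show (starRingEnd ℂ) (xh i) * (xh i / (‖xh i‖ : ℂ))
            = ((starRingEnd ℂ) (xh i) * xh i) / (‖xh i‖ : ℂ) by ring]
        rw [show (starRingEnd ℂ) (xh i) * xh i = ((‖xh i‖^2 : ℝ) : ℂ) by
          rw [Complex.sq_norm]; exact Complex.normSq_eq_conj_mul_self.symm]
        rw [← Complex.ofReal_div, Complex.ofReal_re]
        field_simp
    have := hK1 v hvb
    rw [reInner_sub_right] at this
    rw [reInner_comm]
    linarith [hvl ▸ this]
  linarith

lemma primal_opt (A : Matrix (Fin m) (Fin n) ℂ) (b : Fin m → ℂ) (μ : ℝ) (hμ : 0 < μ)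
    (xh : Fin n → ℂ) (yh : Fin m → ℂ) (zh : Fin n → ℂ)
    (hK2 : zh = Aᴴ *ᵥ yh) (hK3 : μ • yh = b - A *ᵥ xh)
    (hK4 : ∀ i, ‖zh i‖ ≤ 1)
    (hK1 : ∀ v : Fin n → ℂ, (∀ i, ‖v i‖ ≤ 1) → reInner xh (v - zh) ≤ 0) :
    ∀ x' : Fin n → ℂ,
      l1 xh + (1/(2*μ)) * l2sq (A *ᵥ xh - b) ≤ l1 x' + (1/(2*μ)) * l2sq (A *ᵥ x' - b) := by
  intro x'
  set c : Fin m → ℂ := A *ᵥ xh - b with hc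
  set d : Fin n → ℂ := x' - xh with hd
  have hsplit : A *ᵥ x' - b = c + A *ᵥ d := by
    rw [hc, hd, Matrix.mulVec_sub]
    abel
  have hexp : l2sq (A *ᵥ x' - b) = l2sq c + 2 * reInner c (A *ᵥ d) + l2sq (A *ᵥ d) := by
    rw [hsplit, l2sq_add]
  have hAc : Aᴴ *ᵥ c = -(μ • zh) := by
    have h1 : c = -(μ • yh) := by rw [hK3, hc, neg_sub]
    rw [h1, Matrix.mulVec_neg, Matrix.mulVec_smul, hK2]
  have hcross : reInner c (A *ᵥ d) = -μ * reInner zh d := by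
    rw [reInner_comm, reInner_mulVec_left, hAc]
    rw [show -(μ • zh) = (-μ) • zh by simp]
    rw [reInner_comm, reInner_smul_left]
  have hzd : reInner zh d ≤ l1 x' - l1 xh := by
    rw [hd, reInner_sub_right]
    have h1 : reInner zh x' ≤ l1 x' := reInner_le_l1 zh x' hK4
    have h2 : reInner zh xh = l1 xh := kkt_reInner_eq_l1 xh zh hK4 hK1
    linarith
  have hAd : 0 ≤ l2sq (A *ᵥ d) := l2sq_nonneg _
  have e1 : (1/(2*μ)) * (2 * (-μ * reInner zh d)) = - reInner zh d := by
    field_simp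
  have h2μ : (0:ℝ) < 1/(2*μ) := by positivity
  rw [hexp, hcross]
  nlinarith [mul_le_mul_of_nonneg_left hAd h2μ.le]

lemma dual_opt (A : Matrix (Fin m) (Fin n) ℂ) (b : Fin m → ℂ) (μ : ℝ) (hμ : 0 < μ)
    (xh : Fin n → ℂ) (yh : Fin m → ℂ) (zh : Fin n → ℂ)
    (hK2 : zh = Aᴴ *ᵥ yh) (hK3 : μ • yh = b - A *ᵥ xh)
    (hK1 : ∀ v : Fin n → ℂ, (∀ i, ‖v i‖ ≤ 1) → reInner xh (v - zh) ≤ 0) :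
    ∀ (y' : Fin m → ℂ) (z' : Fin n → ℂ), z' = Aᴴ *ᵥ y' → linf z' ≤ 1 →
      reInner b y' - (μ/2) * l2sq y' ≤ reInner b yh - (μ/2) * l2sq yh := by
  intro y' z' hz' hlinf
  have hz'b : ∀ i, ‖z' i‖ ≤ 1 := by
    intro i
    refine le_trans ?_ hlinf
    exact le_ciSup (f := fun j => ‖z' j‖)
      (Set.Finite.bddAbove (Set.finite_range _)) i
  have hb : b = μ • yh + A *ᵥ xh := by rw [hK3]; abel
  set w : Fin m → ℂ := y' - yh with hw
  have hy' : y' = yh + w := by rw [hw]; abel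
  have hsq : l2sq y' = l2sq yh + 2 * reInner yh w + l2sq w := by rw [hy', l2sq_add]
  have hbw : reInner b w = μ * reInner yh w + reInner (A *ᵥ xh) w := by
    rw [hb, reInner_add_left, reInner_smul_left]
  have hby' : reInner b y' = reInner b yh + reInner b w := by
    rw [hy', reInner_add_right]
  have hAx : reInner (A *ᵥ xh) w = reInner xh (z' - zh) := by
    rw [reInner_mulVec_left, hw, Matrix.mulVec_sub, ← hz', ← hK2]
  have hneg : reInner xh (z' - zh) ≤ 0 := hK1 z' hz'b
  have hw2 : 0 ≤ l2sq w := l2sq_nonneg _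
  rw [hby', hsq, hbw, hAx]
  nlinarith [hneg, hw2]

end opt

section step
variable {m n : ℕ} (A : Matrix (Fin m) (Fin n) ℂ) (b : Fin m → ℂ) (μ β γ : ℝ)
variable (x : ℕ → Fin n → ℂ) (y : ℕ → Fin m → ℂ) (z : ℕ → Fin n → ℂ)

lemma l2sq_sub {ι : Type*} [Fintype ι] (u v : ι → ℂ) :
    l2sq (u - v) = l2sq u - 2 * reInner u v + l2sq v := by
  rw [sub_eq_add_neg, l2sq_add, reInner_neg_right]
  have : l2sq (-v) = l2sq v := by
    rw [show -v = ((-1 : ℝ)) • v by funext i; simp, l2sq_smul]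
    ring
  rw [this]
  ring

lemma iter_z_box (hz : ∀ k, z (k+1) = projBox (Aᴴ.mulVec (y k) + (1/β) • x k)) (k : ℕ) :
    ∀ i, ‖z (k+1) i‖ ≤ 1 := by
  intro i
  rw [hz k]
  exact abs_projBox_le _ i

lemma iter_z_var (hβ : 0 < β)
    (hz : ∀ k, z (k+1) = projBox (Aᴴ.mulVec (y k) + (1/β) • x k)) (k : ℕ) :
    ∀ v : Fin n → ℂ, (∀ i, ‖v i‖ ≤ 1) →
      reInner (x k + β • (Aᴴ *ᵥ y k) - β • z (k+1)) (v - z (k+1)) ≤ 0 := by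
  intro v hv
  have hvec : x k + β • (Aᴴ *ᵥ y k) - β • z (k+1)
      = β • ((Aᴴ *ᵥ y k + (1/β) • x k) - z (k+1)) := by
    rw [smul_sub, smul_add, smul_smul, mul_one_div, div_self hβ.ne', one_smul]
    abel
  rw [hvec, reInner_smul_left]
  apply mul_nonpos_of_nonneg_of_nonpos hβ.le
  rw [hz k]
  exact projBox_var_ineq _ v hv

lemma iter_y_eq (hμ : 0 < μ) (hβ : 0 < β)
    (hy : ∀ k, y (k+1) = (β/(μ+β)) • (A.mulVec (z (k+1)) - (1/β) • (A.mulVec (x k) - b)))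
    (k : ℕ) :
    μ • y (k+1) + β • y (k+1) = b - A *ᵥ x k + β • (A *ᵥ z (k+1)) := by
  have hμβ : μ + β ≠ 0 := ne_of_gt (by linarith)
  rw [hy k, smul_smul, smul_smul, ← add_smul]
  rw [show μ * (β/(μ+β)) + β * (β/(μ+β)) = β by field_simp]
  rw [smul_sub, smul_smul, mul_one_div, div_self hβ.ne', one_smul]
  abel

lemma iter_x_eq (hx : ∀ k, x (k+1) = x k - (γ * β) • (z (k+1) - Aᴴ.mulVec (y (k+1)))) (k : ℕ) :
    x (k+1) = x k + (γ*β) • (Aᴴ *ᵥ y (k+1) - z (k+1)) := by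
  rw [hx k, smul_sub, smul_sub]
  abel

set_option maxHeartbeats 1000000 in
lemma step_ineq (hA : A * Aᴴ = 1) (hμ : 0 < μ) (hβ : 0 < β) (hγ : 0 < γ)
    (hz : ∀ k, z (k+1) = projBox (Aᴴ.mulVec (y k) + (1/β) • x k))
    (hy : ∀ k, y (k+1) = (β/(μ+β)) • (A.mulVec (z (k+1)) - (1/β) • (A.mulVec (x k) - b)))
    (hx : ∀ k, x (k+1) = x k - (γ * β) • (z (k+1) - Aᴴ.mulVec (y (k+1))))
    (xh : Fin n → ℂ) (yh : Fin m → ℂ) (zh : Fin n → ℂ)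
    (hK2 : zh = Aᴴ *ᵥ yh) (hK3 : μ • yh = b - A *ᵥ xh)
    (hK4 : ∀ i, ‖zh i‖ ≤ 1)
    (hK1 : ∀ v : Fin n → ℂ, (∀ i, ‖v i‖ ≤ 1) → reInner xh (v - zh) ≤ 0)
    (k : ℕ) :
    l2sq (x (k+2) - xh) + γ*β^2 * l2sq (y (k+2) - yh)
      + γ*β^2*(γ-1)^2 * l2sq ((Aᴴ *ᵥ y (k+2)) - z (k+2))
      + 2*γ*β*μ * l2sq (y (k+2) - yh)
      + γ*β^2*(1+γ-γ^2) * l2sq ((Aᴴ *ᵥ y (k+2)) - z (k+2))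
    ≤ l2sq (x (k+1) - xh) + γ*β^2 * l2sq (y (k+1) - yh)
      + γ*β^2*(γ-1)^2 * l2sq ((Aᴴ *ᵥ y (k+1)) - z (k+1)) := by
  set P : Fin n → ℂ := x (k+1) - xh with hP
  set P' : Fin n → ℂ := x (k+2) - xh with hP'
  set Q : Fin m → ℂ := y (k+2) - yh with hQ
  set Q0 : Fin m → ℂ := y (k+1) - yh with hQ0
  set R : Fin n → ℂ := z (k+2) - zh with hR
  set D : Fin n → ℂ := (Aᴴ *ᵥ y (k+2)) - z (k+2) with hD
  set D0 : Fin n → ℂ := (Aᴴ *ᵥ y (k+1)) - z (k+1) with hD0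
  set Δ : Fin m → ℂ := y (k+2) - y (k+1) with hΔ
  have cancel : ∀ u : Fin m → ℂ, A *ᵥ (Aᴴ *ᵥ u) = u := mulVec_conjT_cancel A hA
  have hI3 := iter_y_eq A b μ β x y z hμ hβ hy (k+1)
  have hI3p := iter_y_eq A b μ β x y z hμ hβ hy k
  have hI4 := iter_x_eq A β γ x y z hx (k+1)
  have hI4p := iter_x_eq A β γ x y z hx k
  -- (F1)
  have hF1 : P' = P + (γ*β) • D := by
    rw [hP', hP, hD, hI4]
    abel
  -- (F2) : μ • Q = -(A *ᵥ (P + β • D))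
  have hF2 : μ • Q = -(A *ᵥ (P + β • D)) := by
    have hexp : A *ᵥ (P + β • D)
        = (A *ᵥ x (k+1)) - (A *ᵥ xh) + (β • y (k+2) - β • (A *ᵥ z (k+2))) := by
      rw [Matrix.mulVec_add, Matrix.mulVec_smul, hP, hD, Matrix.mulVec_sub,
        Matrix.mulVec_sub, cancel, smul_sub]
    rw [hexp, hQ]
    funext i
    have h1 := congrFun hI3 i
    have h2 := congrFun hK3 i
    simp only [Pi.add_apply, Pi.sub_apply, Pi.neg_apply, Pi.smul_apply,
      Complex.real_smul] at h1 h2 ⊢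
    linear_combination h1 - h2
  -- (F3)
  have hF3 : Aᴴ *ᵥ Q = D + R := by
    rw [hQ, hD, hR, Matrix.mulVec_sub, hK2]
    abel
  -- (F4)
  have hF4 : x (k+1) + β • (Aᴴ *ᵥ y (k+1)) - β • z (k+2)
      = (P + β • D) + xh - β • (Aᴴ *ᵥ Δ) := by
    have hAΔ : Aᴴ *ᵥ Δ = (Aᴴ *ᵥ y (k+2)) - (Aᴴ *ᵥ y (k+1)) := by
      rw [hΔ, Matrix.mulVec_sub]
    rw [hAΔ, hP, hD, smul_sub, smul_sub]
    abel
  -- (F5) : μ • Δ = -(β • (A *ᵥ D)) - ((γ-1)*β) • (A *ᵥ D0)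
  have hF5 : μ • Δ = -(β • (A *ᵥ D)) - ((γ-1)*β) • (A *ᵥ D0) := by
    have hz2 : A *ᵥ z (k+2) = y (k+2) - A *ᵥ D := by
      rw [show z (k+2) = (Aᴴ *ᵥ y (k+2)) - D by rw [hD]; abel, Matrix.mulVec_sub, cancel]
    have hz1 : A *ᵥ z (k+1) = y (k+1) - A *ᵥ D0 := by
      rw [show z (k+1) = (Aᴴ *ᵥ y (k+1)) - D0 by rw [hD0]; abel, Matrix.mulVec_sub, cancel]
    have hxk : A *ᵥ x (k+1) = A *ᵥ x k + (γ*β) • (A *ᵥ D0) := by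
      rw [hI4p, Matrix.mulVec_add, Matrix.mulVec_smul, hD0]
    rw [hz2] at hI3
    rw [hz1] at hI3p
    rw [hxk] at hI3
    rw [hΔ]
    funext i
    have h1 := congrFun hI3 i
    have h2 := congrFun hI3p i
    simp only [Pi.add_apply, Pi.sub_apply, Pi.neg_apply, Pi.smul_apply,
      Complex.real_smul, Complex.ofReal_mul, Complex.ofReal_sub, Complex.ofReal_one] at h1 h2 ⊢
    linear_combination h1 - h2
  -- scalar abbreviations
  set pp := l2sq P with hpp
  set pp' := l2sq P' with hpp'
  set qq := l2sq Q with hqq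
  set q0 := l2sq Q0 with hq0
  set dd := l2sq D with hdd
  set d0 := l2sq D0 with hd0
  set tt := l2sq Δ with htt
  set c1 := reInner P D with hc1
  set c2 := reInner (Aᴴ *ᵥ Δ) D with hc2
  set c3 := reInner (Aᴴ *ᵥ Δ) D0 with hc3
  set cQ := reInner Δ Q with hcQ
  set cR := reInner (Aᴴ *ᵥ Δ) R with hcR
  -- E1
  have hE1 : μ * qq + (reInner P (Aᴴ *ᵥ Q) + β * reInner D (Aᴴ *ᵥ Q)) = 0 := by
    have h1 : reInner (μ • Q) Q = reInner (-(A *ᵥ (P + β • D))) Q := by rw [hF2]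
    rw [reInner_smul_left, reInner_neg_left, reInner_mulVec_left, reInner_add_left,
      reInner_smul_left] at h1
    rw [hqq, l2sq_eq_reInner]
    linarith [h1]
  -- E2
  have hE2 : reInner P R + β * reInner D R ≥ β * cR := by
    have hvar := iter_z_var A β x y z hβ hz (k+1) zh hK4
    rw [hF4] at hvar
    have hzz : zh - z (k+2) = -R := by rw [hR]; abel
    rw [hzz, reInner_neg_right, reInner_sub_left, reInner_add_left, reInner_add_left,
      reInner_smul_left, reInner_smul_left] at hvar
    have hxhR' : reInner xh R ≤ 0 := by
      rw [hR]
      exact hK1 (z (k+2)) (iter_z_box A β x y z hz (k+1))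
    rw [hcR]
    linarith [hvar, hxhR']
  -- E3
  have hE3 : μ * qq + c1 + β * dd ≤ -(β * cR) := by
    have hsplit : ∀ u : Fin n → ℂ, reInner u (Aᴴ *ᵥ Q) = reInner u D + reInner u R := by
      intro u
      rw [hF3, reInner_add_right]
    have h1 := hsplit P
    have h2 := hsplit D
    have hDD : reInner D D = dd := by rw [hdd, l2sq_eq_reInner]
    rw [h1, h2, hDD] at hE1
    rw [hc1]
    linarith [hE1, hE2]
  -- E4
  have hE4 : pp' = pp + 2*(γ*β)*c1 + (γ*β)^2 * dd := by
    rw [hpp', hF1, l2sq_add, reInner_smul_right, l2sq_smul, hpp, hc1, hdd]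
    ring
  -- E5
  have hE5 : cR = cQ - c2 := by
    have h1 : R = (Aᴴ *ᵥ Q) - D := by rw [hF3]; abel
    rw [hcR, h1, reInner_sub_right, reInner_iso A hA, hcQ, hc2]
  -- E5b
  have hE5b : 2 * cQ = qq - q0 + tt := by
    have h1 : Q0 = Q - Δ := by rw [hQ0, hQ, hΔ]; abel
    have h2 : q0 = qq - 2 * reInner Q Δ + tt := by
      rw [hq0, h1, l2sq_sub, hqq, htt]
    rw [hcQ, reInner_comm]
    linarith [h2]
  -- E7
  have hE7 : μ * tt + β * c2 + (γ-1)*β * c3 = 0 := by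
    have h1 := congrArg (fun v => reInner v Δ) hF5
    simp only [reInner_smul_left, reInner_sub_left, reInner_neg_left,
      reInner_mulVec_left] at h1
    rw [htt, l2sq_eq_reInner, hc2, hc3, reInner_comm (Aᴴ *ᵥ Δ) D,
      reInner_comm (Aᴴ *ᵥ Δ) D0]
    linarith [h1]
  -- E8
  have hE8 : 0 ≤ tt + 2*(γ-1)*c3 + (γ-1)^2 * d0 := by
    have h1 : 0 ≤ l2sq ((Aᴴ *ᵥ Δ) + ((γ-1) : ℝ) • D0) := l2sq_nonneg _
    rw [l2sq_add, reInner_smul_right, l2sq_smul, l2sq_iso A hA] at h1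
    rw [htt, hc3, hd0]
    linarith [h1]
  -- assembly
  have h2γβ : (0:ℝ) ≤ 2*γ*β := (mul_pos (mul_pos two_pos hγ) hβ).le
  have hγβ2 : (0:ℝ) ≤ γ*β^2 := (mul_pos hγ (pow_pos hβ 2)).le
  have s3 : 2*γ*β * (μ*qq + c1 + β*dd) ≤ 2*γ*β * (-(β*cR)) :=
    mul_le_mul_of_nonneg_left hE3 h2γβ
  have s5 : γ*β^2 * (2*cR) = γ*β^2 * (2*(cQ - c2)) := by rw [hE5]
  have s5b : γ*β^2 * (2*cQ) = γ*β^2 * (qq - q0 + tt) := by rw [hE5b]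
  have s7 : 2*γ*β * (μ*tt + β*c2 + (γ-1)*β*c3) = 0 := by rw [hE7]; ring
  have s8 : 0 ≤ γ*β^2 * (tt + 2*(γ-1)*c3 + (γ-1)^2*d0) := mul_nonneg hγβ2 hE8
  have htt0 : (0:ℝ) ≤ tt := l2sq_nonneg _
  have s9 : 0 ≤ 2*γ*β*μ*tt :=
    mul_nonneg (mul_nonneg (mul_nonneg (by linarith) hβ.le) hμ.le) htt0
  linarith only [s3, hE4, s5, s5b, s7, s8, s9]

end step


set_option maxHeartbeats 1000000 in
/-- Remark 2 (convergence of the dual ADM (2.28) when AA* = I): the iterates converge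
to a primal-dual solution of QP_mu and its dual (2.26). -/
theorem dadm_qp_convergence {m n : ℕ} (A : Matrix (Fin m) (Fin n) ℂ)
    (hA : A * Aᴴ = 1) (b : Fin m → ℂ) (μ β γ : ℝ)
    (hμ : 0 < μ) (hβ : 0 < β) (hγ : 0 < γ) (hγ' : γ < (1 + Real.sqrt 5) / 2)
    (x : ℕ → Fin n → ℂ) (y : ℕ → Fin m → ℂ) (z : ℕ → Fin n → ℂ)
    (hz : ∀ k, z (k+1) = projBox (Aᴴ.mulVec (y k) + (1/β) • x k))
    (hy : ∀ k, y (k+1) = (β/(μ+β)) • (A.mulVec (z (k+1)) - (1/β) • (A.mulVec (x k) - b)))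
    (hx : ∀ k, x (k+1) = x k - (γ * β) • (z (k+1) - Aᴴ.mulVec (y (k+1)))) :
    ∃ (xt : Fin n → ℂ) (yt : Fin m → ℂ) (zt : Fin n → ℂ),
      Tendsto x atTop (𝓝 xt) ∧ Tendsto y atTop (𝓝 yt) ∧ Tendsto z atTop (𝓝 zt) ∧
      (∀ x' : Fin n → ℂ,
        l1 xt + (1/(2*μ)) * l2sq (A.mulVec xt - b) ≤
          l1 x' + (1/(2*μ)) * l2sq (A.mulVec x' - b)) ∧
      zt = Aᴴ.mulVec yt ∧ linf zt ≤ 1 ∧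
      (∀ (y' : Fin m → ℂ) (z' : Fin n → ℂ), z' = Aᴴ.mulVec y' → linf z' ≤ 1 →
        reInner b y' - (μ/2) * l2sq y' ≤ reInner b yt - (μ/2) * l2sq yt) := by
  -- golden ratio bound
  have hs1 : 1 < Real.sqrt 5 := by
    nlinarith [Real.sq_sqrt (show (0:ℝ) ≤ 5 by norm_num), Real.sqrt_nonneg 5]
  have hγ2 : γ^2 < γ + 1 := by
    have hfac : 0 < ((1 + Real.sqrt 5)/2 - γ) * (γ + (Real.sqrt 5 - 1)/2) :=
      mul_pos (by linarith) (by linarith)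
    nlinarith [hfac, Real.sq_sqrt (show (0:ℝ) ≤ 5 by norm_num)]
  have hposA : (0:ℝ) < 2*γ*β*μ := by positivity
  have hposB : (0:ℝ) < γ*β^2*(1+γ-γ^2) := by
    apply mul_pos (by positivity)
    nlinarith [hγ2]
  have hγβ2 : (0:ℝ) ≤ γ*β^2 := by positivity
  have hγβ2' : (0:ℝ) ≤ γ*β^2*(γ-1)^2 := by positivity
  -- KKT anchor
  obtain ⟨x0h, yh, zh, hK2, hK3, hK4, hK1⟩ := exists_kkt A b μ hμ
  set Vf : (Fin n → ℂ) → ℕ → ℝ := fun xa k =>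
    l2sq (x k - xa) + γ*β^2 * l2sq (y k - yh)
      + γ*β^2*(γ-1)^2 * l2sq ((Aᴴ *ᵥ y k) - z k) with hVf
  have hVnonneg : ∀ xa k, 0 ≤ Vf xa k := by
    intro xa k
    have h1 := l2sq_nonneg (x k - xa)
    have h2 := l2sq_nonneg (y k - yh)
    have h3 := l2sq_nonneg ((Aᴴ *ᵥ y k) - z k)
    have := mul_nonneg hγβ2 h2
    have := mul_nonneg hγβ2' h3
    simp only [hVf]
    linarith
  have hstep : ∀ (xa : Fin n → ℂ), (μ • yh = b - A *ᵥ xa) →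
      (∀ v : Fin n → ℂ, (∀ i, ‖v i‖ ≤ 1) → reInner xa (v - zh) ≤ 0) →
      ∀ k, Vf xa (k+2) + 2*γ*β*μ * l2sq (y (k+2) - yh)
        + γ*β^2*(1+γ-γ^2) * l2sq ((Aᴴ *ᵥ y (k+2)) - z (k+2)) ≤ Vf xa (k+1) := by
    intro xa hk3 hk1 k
    have := step_ineq A b μ β γ x y z hA hμ hβ hγ hz hy hx xa yh zh hK2 hk3 hK4 hk1 k
    simp only [hVf]
    linarith [this]
  -- monotone Lyapunov with anchor x0h
  set W : ℕ → ℝ := fun k => Vf x0h (k+1) with hW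
  set aq : ℕ → ℝ := fun k => l2sq (y (k+2) - yh) with haq
  set ad : ℕ → ℝ := fun k => l2sq ((Aᴴ *ᵥ y (k+2)) - z (k+2)) with had
  have haq0 : ∀ k, 0 ≤ aq k := fun k => l2sq_nonneg _
  have had0 : ∀ k, 0 ≤ ad k := fun k => l2sq_nonneg _
  have hWstep : ∀ k, W (k+1) + 2*γ*β*μ * aq k + γ*β^2*(1+γ-γ^2) * ad k ≤ W k :=
    fun k => hstep x0h hK3 hK1 k
  have hWanti : ∀ k, W (k+1) ≤ W k := by
    intro k
    have h1 := hWstep k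
    nlinarith [mul_nonneg hposA.le (haq0 k), mul_nonneg hposB.le (had0 k)]
  have hWnonneg : ∀ k, 0 ≤ W k := fun k => hVnonneg x0h (k+1)
  have hWle0 : ∀ k, W k ≤ W 0 := by
    intro k
    induction k with
    | zero => exact le_rfl
    | succ k ih => exact le_trans (hWanti k) ih
  have htel : ∀ N, ∑ k ∈ range N, (W k - W (k+1)) = W 0 - W N :=
    fun N => Finset.sum_range_sub' W N
  have hsum_gen : ∀ (c : ℝ) (a : ℕ → ℝ), 0 < c → (∀ k, 0 ≤ a k) →
      (∀ k, c * a k ≤ W k - W (k+1)) → Tendsto a atTop (𝓝 0) := by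
    intro c a hc ha hb
    have hsum : ∀ N, ∑ k ∈ range N, a k ≤ W 0 / c := by
      intro N
      rw [le_div_iff₀ hc]
      calc (∑ k ∈ range N, a k) * c = ∑ k ∈ range N, c * a k := by
            rw [Finset.sum_mul]; exact Finset.sum_congr rfl fun k _ => mul_comm _ _
        _ ≤ ∑ k ∈ range N, (W k - W (k+1)) := Finset.sum_le_sum fun k _ => hb k
        _ = W 0 - W N := htel N
        _ ≤ W 0 := by linarith [hWnonneg N]
    have hsummable : Summable a := summable_of_sum_range_le ha hsum
    exact hsummable.tendsto_atTop_zero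
  have haqt : Tendsto aq atTop (𝓝 0) := by
    apply hsum_gen (2*γ*β*μ) aq hposA haq0
    intro k
    have h1 := hWstep k
    nlinarith [mul_nonneg hposB.le (had0 k)]
  have hadt : Tendsto ad atTop (𝓝 0) := by
    apply hsum_gen (γ*β^2*(1+γ-γ^2)) ad hposB had0
    intro k
    have h1 := hWstep k
    nlinarith [mul_nonneg hposA.le (haq0 k)]
  -- convergence of y
  have hy2 : Tendsto (fun k => y (k+2)) atTop (𝓝 yh) := tendsto_of_l2sq_zero haqt
  have hytend : Tendsto y atTop (𝓝 yh) := tendsto_shift (tendsto_shift hy2)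
  -- convergence of the residual D
  have hD2 : Tendsto (fun k => (Aᴴ *ᵥ y (k+2)) - z (k+2)) atTop (𝓝 0) := by
    apply tendsto_of_l2sq_zero
    simpa using hadt
  -- convergence of z
  have hz2 : Tendsto (fun k => z (k+2)) atTop (𝓝 zh) := by
    have h1 : Tendsto (fun k => Aᴴ *ᵥ y (k+2)) atTop (𝓝 (Aᴴ *ᵥ yh)) := tendsto_mulVec hy2
    have h2 := h1.sub hD2
    rw [sub_zero] at h2
    have h3 : ∀ k, (Aᴴ *ᵥ y (k+2)) - ((Aᴴ *ᵥ y (k+2)) - z (k+2)) = z (k+2) := by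
      intro k; abel
    rw [← hK2] at h2
    exact h2.congr h3
  have hztend : Tendsto z atTop (𝓝 zh) := tendsto_shift (tendsto_shift hz2)
  -- full-sequence l2sq convergences
  have hQfull : Tendsto (fun k => l2sq (y k - yh)) atTop (𝓝 0) :=
    tendsto_shift (tendsto_shift haqt)
  have hDfull : Tendsto (fun k => l2sq ((Aᴴ *ᵥ y k) - z k)) atTop (𝓝 0) :=
    tendsto_shift (tendsto_shift hadt)
  -- boundedness of x
  set Rb : ℝ := Real.sqrt (W 0) + (l1 x0h + l1 (x 0)) with hRb
  have hl1n : ∀ (d : ℕ) (v : Fin d → ℂ), 0 ≤ l1 v :=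
    fun d v => Finset.sum_nonneg fun i _ => norm_nonneg _
  have habs_le_l1 : ∀ (d : ℕ) (v : Fin d → ℂ) (i : Fin d), ‖v i‖ ≤ l1 v :=
    fun d v i => Finset.single_le_sum (f := fun j => ‖v j‖)
      (fun j _ => norm_nonneg _) (mem_univ i)
  have hmem : ∀ k, x k ∈ Set.univ.pi (fun _ : Fin n => Metric.closedBall (0:ℂ) Rb) := by
    intro k i _
    simp only [Metric.mem_closedBall, Complex.dist_eq, sub_zero]
    match k with
    | 0 =>
      have := habs_le_l1 n (x 0) i
      have := Real.sqrt_nonneg (W 0)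
      have := hl1n n x0h
      linarith
    | (k+1) =>
      have h1 : ‖x (k+1) i‖ ≤ ‖(x (k+1) - x0h) i‖
          + ‖x0h i‖ := by
        have := norm_add_le ((x (k+1) - x0h) i) (x0h i)
        simpa using this
      have h2 : ‖(x (k+1) - x0h) i‖ ≤ Real.sqrt (W 0) := by
        have h3 : (‖(x (k+1) - x0h) i‖)^2 ≤ l2sq (x (k+1) - x0h) :=
          sq_abs_le_l2sq _ i
        have h4 : l2sq (x (k+1) - x0h) ≤ W k := by
          have h5 : l2sq (x (k+1) - x0h) ≤ Vf x0h (k+1) := by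
            have hq := mul_nonneg hγβ2 (l2sq_nonneg (y (k+1) - yh))
            have hd := mul_nonneg hγβ2' (l2sq_nonneg ((Aᴴ *ᵥ y (k+1)) - z (k+1)))
            simp only [hVf]
            linarith
          exact h5
        have h7 := Real.sqrt_le_sqrt (le_trans h3 (le_trans h4 (hWle0 k)))
        rwa [Real.sqrt_sq (norm_nonneg _)] at h7
      have := habs_le_l1 n x0h i
      have := hl1n n (x 0)
      linarith
  obtain ⟨xhat, hxhatS, φ, hφmono, hφtend⟩ :=
    (isCompact_univ_pi (fun _ : Fin n => isCompact_closedBall (0:ℂ) Rb)).tendsto_subseq hmem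
  have hφat : Tendsto φ atTop atTop := hφmono.tendsto_atTop
  have hφ1 : Tendsto (fun j => φ j + 1) atTop atTop := (tendsto_add_atTop_nat 1).comp hφat
  have hxφ : Tendsto (fun j => x (φ j)) atTop (𝓝 xhat) := hφtend
  have hyφ : Tendsto (fun j => y (φ j)) atTop (𝓝 yh) := hytend.comp hφat
  have hyφ1 : Tendsto (fun j => y (φ j + 1)) atTop (𝓝 yh) := hytend.comp hφ1
  have hzφ1 : Tendsto (fun j => z (φ j + 1)) atTop (𝓝 zh) := hztend.comp hφ1
  -- cluster point KKT : K3
  have hK3hat : μ • yh = b - A *ᵥ xhat := by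
    have hLR : (fun j => μ • y (φ j + 1) + β • y (φ j + 1))
        = (fun j => b - A *ᵥ x (φ j) + β • (A *ᵥ z (φ j + 1))) := by
      funext j
      exact iter_y_eq A b μ β x y z hμ hβ hy (φ j)
    have hL : Tendsto (fun j => μ • y (φ j + 1) + β • y (φ j + 1)) atTop
        (𝓝 (μ • yh + β • yh)) := (hyφ1.const_smul μ).add (hyφ1.const_smul β)
    have hR : Tendsto (fun j => b - A *ᵥ x (φ j) + β • (A *ᵥ z (φ j + 1))) atTop
        (𝓝 (b - A *ᵥ xhat + β • (A *ᵥ zh))) :=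
      (tendsto_const_nhds.sub (tendsto_mulVec hxφ)).add ((tendsto_mulVec hzφ1).const_smul β)
    rw [hLR] at hL
    have heq := tendsto_nhds_unique hL hR
    have hAzh : A *ᵥ zh = yh := by rw [hK2, mulVec_conjT_cancel A hA]
    rw [hAzh] at heq
    exact add_right_cancel heq
  -- cluster point KKT : K1
  have hK1hat : ∀ v : Fin n → ℂ, (∀ i, ‖v i‖ ≤ 1) →
      reInner xhat (v - zh) ≤ 0 := by
    intro v hv
    have hseq : ∀ j, reInner (x (φ j) + β • (Aᴴ *ᵥ y (φ j)) - β • z (φ j + 1))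
        (v - z (φ j + 1)) ≤ 0 := fun j => iter_z_var A β x y z hβ hz (φ j) v hv
    have hu : Tendsto (fun j => x (φ j) + β • (Aᴴ *ᵥ y (φ j)) - β • z (φ j + 1)) atTop
        (𝓝 (xhat + β • (Aᴴ *ᵥ yh) - β • zh)) :=
      (hxφ.add ((tendsto_mulVec hyφ).const_smul β)).sub (hzφ1.const_smul β)
    have hw : Tendsto (fun j => v - z (φ j + 1)) atTop (𝓝 (v - zh)) :=
      tendsto_const_nhds.sub hzφ1
    have hlim := tendsto_reInner hu hw
    have hle := le_of_tendsto hlim (Filter.Eventually.of_forall hseq)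
    have hξ : xhat + β • (Aᴴ *ᵥ yh) - β • zh = xhat := by
      rw [← hK2]; abel
    rwa [hξ] at hle
  -- Fejér with anchor xhat
  set W2 : ℕ → ℝ := fun k => Vf xhat (k+1) with hW2
  have hW2anti : Antitone W2 := by
    apply antitone_nat_of_succ_le
    intro k
    have h1 := hstep xhat hK3hat hK1hat k
    have h2 := mul_nonneg hposA.le (haq0 k)
    have h3 := mul_nonneg hposB.le (had0 k)
    simp only [hW2]
    linarith
  have hW2nonneg : ∀ k, 0 ≤ W2 k := fun k => hVnonneg xhat (k+1)
  have hVφ : Tendsto (fun j => Vf xhat (φ j)) atTop (𝓝 0) := by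
    have hPhat : Tendsto (fun j => l2sq (x (φ j) - xhat)) atTop (𝓝 0) := by
      have h1 : Tendsto (fun j => x (φ j) - xhat) atTop (𝓝 (xhat - xhat)) :=
        hxφ.sub tendsto_const_nhds
      rw [sub_self] at h1
      have h2 := tendsto_l2sq h1
      simpa [l2sq] using h2
    have h3 : Tendsto (fun j => l2sq (y (φ j) - yh)) atTop (𝓝 0) := hQfull.comp hφat
    have h4 : Tendsto (fun j => l2sq ((Aᴴ *ᵥ y (φ j)) - z (φ j))) atTop (𝓝 0) :=
      hDfull.comp hφat
    have h5 := (hPhat.add (h3.const_mul (γ*β^2))).add (h4.const_mul (γ*β^2*(γ-1)^2))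
    simp only [mul_zero, add_zero, zero_add] at h5
    exact h5.congr fun j => by simp only [hVf]
  have hW2tend : Tendsto W2 atTop (𝓝 0) := by
    have hbdd : BddBelow (Set.range W2) := ⟨0, fun r ⟨k, hk⟩ => hk ▸ hW2nonneg k⟩
    have h1 : Tendsto W2 atTop (𝓝 (⨅ k, W2 k)) := tendsto_atTop_ciInf hW2anti hbdd
    have h2 : Tendsto (fun j => W2 (φ j)) atTop (𝓝 (⨅ k, W2 k)) := h1.comp hφat
    have h3 : Tendsto (fun j => W2 (φ j)) atTop (𝓝 0) := by
      apply squeeze_zero' (Filter.Eventually.of_forall fun j => hW2nonneg _) ?_ hVφ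
      filter_upwards [Filter.eventually_ge_atTop 1] with j hj
      have hφj : 1 ≤ φ j := le_trans hj hφmono.le_apply
      calc W2 (φ j) ≤ W2 (φ j - 1) := hW2anti (Nat.sub_le _ _)
        _ = Vf xhat (φ j) := by
            show Vf xhat ((φ j - 1) + 1) = Vf xhat (φ j)
            rw [Nat.sub_add_cancel hφj]
    have := tendsto_nhds_unique h2 h3
    rwa [this] at h1
  have hxtend : Tendsto x atTop (𝓝 xhat) := by
    apply tendsto_shift
    apply tendsto_of_l2sq_zero
    apply squeeze_zero (fun k => l2sq_nonneg _) (fun k => ?_) hW2tend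
    have hq := mul_nonneg hγβ2 (l2sq_nonneg (y (k+1) - yh))
    have hd := mul_nonneg hγβ2' (l2sq_nonneg ((Aᴴ *ᵥ y (k+1)) - z (k+1)))
    simp only [hW2, hVf]
    linarith
  -- conclusion
  refine ⟨xhat, yh, zh, hxtend, hytend, hztend, ?_, hK2, ?_, ?_⟩
  · exact primal_opt A b μ hμ xhat yh zh hK2 hK3hat hK4 hK1hat
  · exact Real.iSup_le (fun i => hK4 i) one_pos.le
  · exact dual_opt A b μ hμ xhat yh zh hK2 hK3hat hK1hat
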